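/- Let $M_\ell = \max_{1\le i\le \ell}|X_i|$ for i.i.d. standard normals, $a_\ell$ the unique positive solution of $1/\ell = \sqrt{2/\pi} e^{-a^2/2}/a$, $b_\ell = 1/a_\ell$, and $Y_\ell = (M_\ell - a_\ell)/b_\ell$. Then for every $y > 0$ and every $\ell \ge 1$, $\mathbb{P}(Y_\ell \ge y) \le e^{-y}$. -/

import Mathlib

open MeasureTheory ProbabilityTheory Real Set

lemma aux_int {x : ℝ} (hx : 0 < x) :
    ∫ t in Set.Ioi x, t * Real.exp (-t^2/2) = Real.exp (-x^2/2) := by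
  have hderiv : ∀ t ∈ Set.Ici x, HasDerivAt (fun t : ℝ => -Real.exp (-t^2/2))
      (t * Real.exp (-t^2/2)) t := by
    intro t _
    have h1 : HasDerivAt (fun t : ℝ => -t^2/2) (-t) t := by
      have := (hasDerivAt_pow 2 t).neg.div_const 2
      refine this.congr_deriv ?_
      norm_num
      ring
    have := h1.exp.neg
    refine this.congr_deriv ?_
    ring
  have hint : IntegrableOn (fun t : ℝ => t * Real.exp (-t^2/2)) (Set.Ioi x) := by
    have h1 : IntegrableOn (fun t : ℝ => t ^ (1:ℝ) * Real.exp (-(1/2) * t^2)) (Set.Ioi 0) :=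
      integrableOn_rpow_mul_exp_neg_mul_sq (by norm_num) (by norm_num)
    have heq : (fun t : ℝ => t ^ (1:ℝ) * Real.exp (-(1/2) * t^2))
        = fun t : ℝ => t * Real.exp (-t^2/2) := by
      funext t
      rw [Real.rpow_one, show -(1/2) * t^2 = -t^2/2 by ring]
    have h2 : IntegrableOn (fun t : ℝ => t * Real.exp (-t^2/2)) (Set.Ioi 0) := heq ▸ h1
    exact h2.mono_set (Set.Ioi_subset_Ioi hx.le)
  have htend : Filter.Tendsto (fun t : ℝ => -Real.exp (-t^2/2)) Filter.atTop (nhds 0) := by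
    have h1 : Filter.Tendsto (fun t : ℝ => -t^2/2) Filter.atTop Filter.atBot := by
      apply Filter.Tendsto.atBot_div_const (by norm_num)
      exact Filter.tendsto_neg_atTop_atBot.comp
        (Filter.tendsto_pow_atTop (by norm_num : (2:ℕ) ≠ 0))
    have := Real.tendsto_exp_atBot.comp h1
    simpa using this.neg
  have := MeasureTheory.integral_Ioi_of_hasDerivAt_of_tendsto' hderiv hint htend
  simpa using this

lemma tail_exp {x : ℝ} (hx : 0 < x) :
    ∫ t in Set.Ioi x, Real.exp (-t^2/2) ≤ Real.exp (-x^2/2) / x := by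
  have hint2 : IntegrableOn (fun t : ℝ => t / x * Real.exp (-t^2/2)) (Set.Ioi x) := by
    have h1 : IntegrableOn (fun t : ℝ => t ^ (1:ℝ) * Real.exp (-(1/2) * t^2)) (Set.Ioi 0) :=
      integrableOn_rpow_mul_exp_neg_mul_sq (by norm_num) (by norm_num)
    have heq : (fun t : ℝ => t ^ (1:ℝ) * Real.exp (-(1/2) * t^2))
        = fun t : ℝ => t * Real.exp (-t^2/2) := by
      funext t
      rw [Real.rpow_one, show -(1/2) * t^2 = -t^2/2 by ring]
    have h2 : IntegrableOn (fun t : ℝ => t * Real.exp (-t^2/2)) (Set.Ioi 0) := heq ▸ h1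
    have h3 : IntegrableOn (fun t : ℝ => t * Real.exp (-t^2/2) / x) (Set.Ioi x) :=
      (h2.mono_set (Set.Ioi_subset_Ioi hx.le)).div_const x
    refine IntegrableOn.congr_fun h3 ?_ measurableSet_Ioi
    intro t _
    ring
  have hint1 : IntegrableOn (fun t : ℝ => Real.exp (-t^2/2)) (Set.Ioi x) := by
    have := integrable_exp_neg_mul_sq (b := 1/2) (by norm_num)
    have h2 : Integrable (fun t : ℝ => Real.exp (-t^2/2)) := by
      refine this.congr ?_
      filter_upwards with t
      ring_nf
    exact h2.integrableOn
  calc ∫ t in Set.Ioi x, Real.exp (-t^2/2)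
      ≤ ∫ t in Set.Ioi x, t / x * Real.exp (-t^2/2) := by
        refine setIntegral_mono_on hint1 hint2 measurableSet_Ioi ?_
        intro t ht
        have h1 : (1:ℝ) ≤ t / x := (one_le_div hx).mpr (le_of_lt ht)
        nlinarith [Real.exp_pos (-t^2/2)]
    _ = (∫ t in Set.Ioi x, t * Real.exp (-t^2/2)) / x := by
        rw [← integral_div]
        congr 1
        ext t
        ring
    _ = Real.exp (-x^2/2) / x := by rw [aux_int hx]

lemma sqrt_two_div_pi : Real.sqrt (2/π) = 2 / Real.sqrt (2*π) := by
  rw [eq_div_iff (by positivity)]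
  rw [← Real.sqrt_mul (by positivity)]
  have h : (2/π) * (2*π) = 4 := by
    field_simp
    ring
  rw [h]
  rw [show (4:ℝ) = 2^2 by norm_num, Real.sqrt_sq (by norm_num)]

lemma gauss_tail {x : ℝ} (hx : 0 < x) :
    gaussianReal 0 1 {t : ℝ | x ≤ |t|} ≤
      ENNReal.ofReal (Real.sqrt (2/π) * Real.exp (-x^2/2) / x) := by
  have hpdf : ∀ t : ℝ, gaussianPDFReal 0 1 t = (Real.sqrt (2*π))⁻¹ * Real.exp (-t^2/2) := by
    intro t
    simp [gaussianPDFReal]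
  have hIci : gaussianReal 0 1 (Set.Ici x) ≤
      ENNReal.ofReal ((Real.sqrt (2*π))⁻¹ * (Real.exp (-x^2/2) / x)) := by
    rw [gaussianReal_apply_eq_integral _ one_ne_zero]
    apply ENNReal.ofReal_le_ofReal
    rw [MeasureTheory.integral_Ici_eq_integral_Ioi]
    calc ∫ t in Set.Ioi x, gaussianPDFReal 0 1 t
        = (Real.sqrt (2*π))⁻¹ * ∫ t in Set.Ioi x, Real.exp (-t^2/2) := by
          rw [← integral_const_mul]
          exact setIntegral_congr_fun measurableSet_Ioi (fun t _ => hpdf t)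
      _ ≤ (Real.sqrt (2*π))⁻¹ * (Real.exp (-x^2/2) / x) := by
          apply mul_le_mul_of_nonneg_left (tail_exp hx) (by positivity)
  have hmap : (gaussianReal 0 1).map (fun t : ℝ => -t) = gaussianReal 0 1 := by
    have := gaussianReal_map_const_mul (μ := 0) (v := 1) (-1)
    simp only [neg_one_mul, mul_zero, neg_zero] at this
    convert this using 2
    ext
    norm_num
  have hIic : gaussianReal 0 1 (Set.Iic (-x)) = gaussianReal 0 1 (Set.Ici x) := by
    conv_lhs => rw [← hmap]
    rw [Measure.map_apply measurable_neg measurableSet_Iic]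
    congr 1
    ext t
    simp
  have hsub : {t : ℝ | x ≤ |t|} ⊆ Set.Iic (-x) ∪ Set.Ici x := by
    intro t ht
    simp only [Set.mem_setOf_eq] at ht
    rcases abs_cases t with ⟨h1, _⟩ | ⟨h1, _⟩
    · right; exact Set.mem_Ici.mpr (h1 ▸ ht)
    · left; exact Set.mem_Iic.mpr (by linarith [h1 ▸ ht])
  calc gaussianReal 0 1 {t : ℝ | x ≤ |t|}
      ≤ gaussianReal 0 1 (Set.Iic (-x) ∪ Set.Ici x) := measure_mono hsub
    _ ≤ gaussianReal 0 1 (Set.Iic (-x)) + gaussianReal 0 1 (Set.Ici x) := measure_union_le _ _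
    _ = gaussianReal 0 1 (Set.Ici x) + gaussianReal 0 1 (Set.Ici x) := by rw [hIic]
    _ ≤ ENNReal.ofReal ((Real.sqrt (2*π))⁻¹ * (Real.exp (-x^2/2) / x)) +
        ENNReal.ofReal ((Real.sqrt (2*π))⁻¹ * (Real.exp (-x^2/2) / x)) := add_le_add hIci hIci
    _ = ENNReal.ofReal (Real.sqrt (2/π) * Real.exp (-x^2/2) / x) := by
        rw [← ENNReal.ofReal_add (by positivity) (by positivity)]
        congr 1
        rw [sqrt_two_div_pi]
        field_simp
        ring

open MeasureTheory ProbabilityTheory Real in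
theorem gumbel_tail_bound
    {Ω : Type*} [MeasureSpace Ω] [IsProbabilityMeasure (ℙ : Measure Ω)]
    (ℓ : ℕ) (hℓ : 1 ≤ ℓ)
    (X : Fin ℓ → Ω → ℝ) (hX : ∀ i, Measurable (X i))
    (hindep : iIndepFun X ℙ)
    (hXgauss : ∀ i, Measure.map (X i) ℙ = gaussianReal 0 1)
    (M : Ω → ℝ)
    (hM : ∀ ω, M ω = Finset.univ.sup' (Finset.univ_nonempty_iff.mpr
      (Fin.pos_iff_nonempty.mp hℓ)) (fun i => |X i ω|))
    (a b : ℝ) (ha : 0 < a)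
    (haeq : (1 : ℝ) / ℓ = Real.sqrt (2 / π) * Real.exp (-a^2 / 2) / a)
    (hb : b = 1 / a)
    (Y : Ω → ℝ) (hY : ∀ ω, Y ω = (M ω - a) / b)
    (y : ℝ) (hy : 0 < y) :
    ℙ {ω | Y ω ≥ y} ≤ ENNReal.ofReal (Real.exp (-y)) := by
  have hbpos : 0 < b := hb ▸ by positivity
  set x : ℝ := a + b * y with hxdef
  have hax : a ≤ x := by nlinarith
  have hx : 0 < x := lt_of_lt_of_le ha hax
  have hS : MeasurableSet {t : ℝ | x ≤ |t|} :=
    measurableSet_le measurable_const measurable_abs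
  have hsub : {ω | Y ω ≥ y} ⊆ ⋃ i, X i ⁻¹' {t : ℝ | x ≤ |t|} := by
    intro ω hω
    simp only [Set.mem_setOf_eq, ge_iff_le, hY] at hω
    have hMx : x ≤ M ω := by
      rw [le_div_iff₀ hbpos] at hω
      nlinarith
    rw [hM ω] at hMx
    obtain ⟨i, _, hi⟩ := Finset.le_sup'_iff _ |>.mp hMx
    exact Set.mem_iUnion.mpr ⟨i, hi⟩
  have hterm : ∀ i : Fin ℓ, ℙ (X i ⁻¹' {t : ℝ | x ≤ |t|}) =
      gaussianReal 0 1 {t : ℝ | x ≤ |t|} := by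
    intro i
    rw [← hXgauss i, Measure.map_apply (hX i) hS]
  have hstep : ℙ {ω | Y ω ≥ y} ≤ (ℓ : ENNReal) * gaussianReal 0 1 {t : ℝ | x ≤ |t|} := by
    calc ℙ {ω | Y ω ≥ y} ≤ ℙ (⋃ i, X i ⁻¹' {t : ℝ | x ≤ |t|}) := measure_mono hsub
      _ ≤ ∑ i : Fin ℓ, ℙ (X i ⁻¹' {t : ℝ | x ≤ |t|}) := measure_iUnion_fintype_le _ _
      _ = (ℓ : ENNReal) * gaussianReal 0 1 {t : ℝ | x ≤ |t|} := by
          rw [Finset.sum_congr rfl (fun i _ => hterm i), Finset.sum_const, Finset.card_univ,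
            Fintype.card_fin, nsmul_eq_mul]
  refine hstep.trans ?_
  have hgt := gauss_tail hx
  calc (ℓ : ENNReal) * gaussianReal 0 1 {t : ℝ | x ≤ |t|}
      ≤ (ℓ : ENNReal) * ENNReal.ofReal (Real.sqrt (2/π) * Real.exp (-x^2/2) / x) :=
        mul_le_mul_right hgt _
    _ = ENNReal.ofReal ((ℓ : ℝ) * (Real.sqrt (2/π) * Real.exp (-x^2/2) / x)) := by
        rw [ENNReal.ofReal_mul (by positivity)]
        simp
    _ ≤ ENNReal.ofReal (Real.exp (-y)) := by
        apply ENNReal.ofReal_le_ofReal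
        have hℓpos : (0:ℝ) < ℓ := by exact_mod_cast hℓ
        have hconst : Real.sqrt (2/π) * Real.exp (-a^2/2) = a / ℓ := by
          field_simp at haeq
          field_simp
          linarith [haeq]
        have hxval : x = a + y / a := by rw [hxdef, hb]; ring
        have hexp : Real.exp (-x^2/2) ≤ Real.exp (-a^2/2) * Real.exp (-y) := by
          rw [← Real.exp_add]
          apply Real.exp_le_exp.mpr
          rw [hxval]
          have h1 : 0 ≤ y^2 / (2 * a^2) := by positivity
          field_simp
          nlinarith [sq_nonneg (y / a), sq_nonneg a, sq_nonneg y]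
        calc (ℓ : ℝ) * (Real.sqrt (2/π) * Real.exp (-x^2/2) / x)
            ≤ (ℓ : ℝ) * (Real.sqrt (2/π) * (Real.exp (-a^2/2) * Real.exp (-y)) / a) := by
              apply mul_le_mul_of_nonneg_left _ (le_of_lt hℓpos)
              apply div_le_div₀ (by positivity) _ ha hax
              exact mul_le_mul_of_nonneg_left hexp (Real.sqrt_nonneg _)
          _ = Real.exp (-y) := by
              have : Real.sqrt (2/π) * (Real.exp (-a^2/2) * Real.exp (-y)) =
                  (a / ℓ) * Real.exp (-y) := by rw [← mul_assoc, hconst]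
              rw [this]
              field_simp
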